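/- Let m ≥ 2 and let C_1, …, C_{m−1} be core transformations in ℂ^{m×m}, where C_j has active part at position j. Then the descending product C = C_1 C_2 ⋯ C_{m−1} is upper Hessenberg (C_{ij} = 0 whenever i > j+1), its subdiagonal entries satisfy C_{j+1,j} = (C_j)_{j+1,j} for every j = 1,…,m−1, and consequently C is properly upper Hessenberg (all subdiagonal entries nonzero) if and only if every C_j is nontrivial. -/

import Mathlib

open Matrix

noncomputable section

/-- A core transformation with active part at position `j` (0-based; rows/columns
`j` and `j+1` of an `(n+1) × (n+1)` matrix): a unitary matrix equal to the identity
outside the 2×2 principal submatrix in rows and columns `j, j+1`. -/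
def IsCore {n : ℕ} (j : Fin n) (U : Matrix (Fin (n + 1)) (Fin (n + 1)) ℂ) : Prop :=
  U ∈ Matrix.unitaryGroup (Fin (n + 1)) ℂ ∧
  ∀ p q : Fin (n + 1),
    ¬((p = j.castSucc ∨ p = j.succ) ∧ (q = j.castSucc ∨ q = j.succ)) →
      U p q = if p = q then 1 else 0

/-- Ordered product `A 0 * A 1 * ⋯ * A (k-1)` of a finite sequence of matrices. -/
def seqProd {m k : ℕ} (A : Fin k → Matrix (Fin m) (Fin m) ℂ) : Matrix (Fin m) (Fin m) ℂ :=
  ((List.finRange k).map A).prod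

/-- Partial products of the sequence of core transformations. -/
private def P {n : ℕ} (C : Fin n → Matrix (Fin (n+1)) (Fin (n+1)) ℂ) (k : ℕ) :
    Matrix (Fin (n+1)) (Fin (n+1)) ℂ :=
  (((List.finRange n).take k).map C).prod

private lemma P_zero {n : ℕ} (C : Fin n → Matrix (Fin (n+1)) (Fin (n+1)) ℂ) : P C 0 = 1 := rfl

private lemma P_succ {n : ℕ} (C : Fin n → Matrix (Fin (n+1)) (Fin (n+1)) ℂ) {k : ℕ}
    (hk : k < n) : P C (k+1) = P C k * C ⟨k, hk⟩ := by
  unfold P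
  rw [List.take_succ]
  have : (List.finRange n)[k]? = some ⟨k, hk⟩ := by
    rw [List.getElem?_eq_getElem (by simp [hk])]
    simp
  rw [this]
  simp

private lemma P_stab {n : ℕ} (C : Fin n → Matrix (Fin (n+1)) (Fin (n+1)) ℂ) {k : ℕ}
    (hk : n ≤ k) : P C (k+1) = P C k := by
  unfold P
  rw [List.take_of_length_le (by simp; omega), List.take_of_length_le (by simp; omega)]

private lemma seqProd_eq_P {n : ℕ} (C : Fin n → Matrix (Fin (n+1)) (Fin (n+1)) ℂ) :
    seqProd C = P C n := by
  unfold seqProd P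
  rw [List.take_of_length_le (by simp)]

private lemma key {n : ℕ} (C : Fin n → Matrix (Fin (n+1)) (Fin (n+1)) ℂ)
    (hC : ∀ j, IsCore j (C j)) (k : ℕ) :
    (∀ p q : Fin (n+1), (q:ℕ)+1 < (p:ℕ) → P C k p q = 0) ∧
    (∀ p q : Fin (n+1), k < (p:ℕ) → P C k p q = if p = q then 1 else 0) ∧
    (∀ j : Fin n, (j:ℕ) < k → P C k j.succ j.castSucc = (C j) j.succ j.castSucc) := by
  induction k with
  | zero =>
    refine ⟨fun p q h => ?_, fun p q _ => ?_, fun j hj => absurd hj (by omega)⟩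
    · rw [P_zero, Matrix.one_apply_ne (by intro e; rw [e] at h; omega)]
    · rw [P_zero, Matrix.one_apply]
  | succ k IH =>
    obtain ⟨IHA, IHB, IHC⟩ := IH
    by_cases hkn : k < n
    · set jk : Fin n := ⟨k, hkn⟩ with hjk
      have hcs : ((jk.castSucc : Fin (n+1)) : ℕ) = k := rfl
      have hss : ((jk.succ : Fin (n+1)) : ℕ) = k + 1 := rfl
      have hU := (hC jk).2
      -- column collapse: if q ∉ {k, k+1}
      have colcol : ∀ p q : Fin (n+1), (q:ℕ) ≠ k → (q:ℕ) ≠ k+1 →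
          P C (k+1) p q = P C k p q := by
        intro p q h1 h2
        rw [P_succ C hkn, Matrix.mul_apply]
        have : ∀ r : Fin (n+1), P C k p r * (C jk) r q
            = if r = q then P C k p r else 0 := by
          intro r
          rw [hU r q (by
            rintro ⟨-, hq | hq⟩
            · exact h1 (by rw [hq, hcs])
            · exact h2 (by rw [hq, hss]))]
          split <;> simp
        rw [Finset.sum_congr rfl (fun r _ => this r), Finset.sum_ite_eq', if_pos (Finset.mem_univ _)]
      -- row collapse: if k < p
      have rowcol : ∀ p q : Fin (n+1), k < (p:ℕ) →
          P C (k+1) p q = (C jk) p q := by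
        intro p q hp
        rw [P_succ C hkn, Matrix.mul_apply]
        have : ∀ r : Fin (n+1), P C k p r * (C jk) r q
            = if p = r then (C jk) r q else 0 := by
          intro r
          rw [IHB p r hp]
          split <;> simp
        rw [Finset.sum_congr rfl (fun r _ => this r), Finset.sum_ite_eq, if_pos (Finset.mem_univ _)]
      refine ⟨?_, ?_, ?_⟩
      · intro p q hpq
        by_cases hq : (q:ℕ) ≠ k ∧ (q:ℕ) ≠ k+1
        · rw [colcol p q hq.1 hq.2]; exact IHA p q hpq
        · have hp : k + 1 < (p:ℕ) := by omega
          rw [rowcol p q (by omega), hU p q (by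
            rintro ⟨hp' | hp', -⟩
            · have := congrArg (Fin.val) hp'; rw [hcs] at this; omega
            · have := congrArg (Fin.val) hp'; rw [hss] at this; omega)]
          rw [if_neg (by intro e; rw [e] at hpq; omega)]
      · intro p q hp
        rw [rowcol p q (by omega), hU p q (by
          rintro ⟨hp' | hp', -⟩
          · have := congrArg (Fin.val) hp'; rw [hcs] at this; omega
          · have := congrArg (Fin.val) hp'; rw [hss] at this; omega)]
      · intro j hj
        rcases Nat.lt_or_ge (j:ℕ) k with hjk' | hjk'
        · rw [colcol j.succ j.castSucc (by simp; omega) (by simp; omega)]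
          exact IHC j hjk'
        · have hjeq : j = jk := by
            apply Fin.ext; simp [hjk]; omega
          rw [rowcol j.succ j.castSucc (by simp; omega), hjeq]
    · refine ⟨?_, ?_, ?_⟩
      · intro p q h; rw [P_stab C (by omega)]; exact IHA p q h
      · intro p q h; rw [P_stab C (by omega)]; exact IHB p q (by omega)
      · intro j hj; rw [P_stab C (by omega)]; exact IHC j (by omega)

/-- A descending product of core transformations (at positions `1, …, m−1` of an
`m × m` matrix, `m = n+1 ≥ 2`) is upper Hessenberg, its subdiagonal entries equal those
of the corresponding factors, and it is properly upper Hessenberg iff every factor is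
nontrivial. -/
theorem descending_sequence_hessenberg (n : ℕ) (hn : 1 ≤ n)
    (C : Fin n → Matrix (Fin (n + 1)) (Fin (n + 1)) ℂ)
    (hC : ∀ j, IsCore j (C j)) :
    (∀ p q : Fin (n + 1), (q : ℕ) + 1 < (p : ℕ) → seqProd C p q = 0) ∧
    (∀ j : Fin n, seqProd C j.succ j.castSucc = (C j) j.succ j.castSucc) ∧
    ((∀ j : Fin n, seqProd C j.succ j.castSucc ≠ 0) ↔
      (∀ j : Fin n, (C j) j.succ j.castSucc ≠ 0)) := by
  obtain ⟨hA, hB, hCsub⟩ := key C hC n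
  have hsub : ∀ j : Fin n, seqProd C j.succ j.castSucc = (C j) j.succ j.castSucc := by
    intro j
    rw [seqProd_eq_P]
    exact hCsub j j.isLt
  refine ⟨?_, hsub, ?_⟩
  · intro p q h
    rw [seqProd_eq_P]
    exact hA p q h
  · constructor
    · intro h j; rw [← hsub j]; exact h j
    · intro h j; rw [hsub j]; exact h j
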